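/- For any indexed forest F, the forest polynomial equals the sum over decreasing labelings ℓ of F of the slide polynomial of the word i_ℓ, where i_ℓ records the ρ_F-values of internal nodes in the order given by ℓ (from |F| down, i.e., following the linear extension): β_F = Σ_{ℓ ∈ Dec(F)} 𝔉(i_ℓ). -/

import Mathlib

/-- Plane binary trees. `leaf` is a leaf, `node l r` an internal node. -/
inductive BT where
  | leaf : BT
  | node : BT → BT → BT
deriving DecidableEq

/-- Number of internal nodes. -/
def BT.size : BT → ℕ
  | .leaf => 0
  | .node l r => l.size + r.size + 1

/-- Multiset of values `ρ_F(v)` (canonical label of the leftmost descendant,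
reached by following left edges) over the internal nodes of a tree whose
inorder canonical labels start at `a`. -/
def BT.rhoMS : BT → ℤ → Multiset ℤ
  | .leaf, _ => 0
  | .node l r, a => a ::ₘ (l.rhoMS a + r.rhoMS (a + l.size + 1))

/-- Multiset of canonical labels of internal nodes whose left child is a leaf
("left support"). -/
def BT.lsuppMS : BT → ℤ → Multiset ℤ
  | .leaf, _ => 0
  | .node l r, a =>
      (if l = BT.leaf then ({a} : Multiset ℤ) else 0) + l.lsuppMS a
        + r.lsuppMS (a + l.size + 1)

/-- The flagged generating polynomial of a binary tree with inorder labels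
starting at `a`, where every label is at least `lo` (lower bound transmitted
from the parent), at most the `ρ`-value of the node, labels weakly increase
down left edges and strictly increase down right edges. The variables are
`x_1, x_2, …` (the variable `X 0` is unused). -/
noncomputable def BT.polyAux : BT → ℤ → ℕ → MvPolynomial ℕ ℚ
  | .leaf, _, _ => 1
  | .node l r, a, lo =>
      ∑ k ∈ Finset.Icc lo a.toNat,
        MvPolynomial.X k * l.polyAux a k * r.polyAux (a + l.size + 1) (k + 1)

/-- The forest polynomial of a single indexed tree with support starting at `a`. -/
noncomputable def BT.poly (t : BT) (a : ℤ) : MvPolynomial ℕ ℚ := t.polyAux a 1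

/-- An indexed forest: a list of binary trees together with the starting points
of their supports, the supports being maximal intervals (consecutive supports
leave a gap of at least one integer). -/
structure IndexedForest where
  trees : List (ℤ × BT)
  nonempty : ∀ p ∈ trees, p.2 ≠ BT.leaf
  gaps : trees.Chain' (fun p q => p.1 + (p.2.size : ℤ) + 1 ≤ q.1)

/-- The support of an indexed forest, as a set of integers. -/
def IndexedForest.Supp (F : IndexedForest) : Set ℤ :=
  {i | ∃ p ∈ F.trees, p.1 ≤ i ∧ i < p.1 + (p.2.size : ℤ)}

/-- The multiset of `ρ_F`-values of all internal nodes of `F`. -/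
def IndexedForest.rhoMS (F : IndexedForest) : Multiset ℤ :=
  (F.trees.map (fun p => p.2.rhoMS p.1)).sum

/-- The `ℕ`-vector `c(F)`: `c_i` counts internal nodes with `ρ_F`-value `i`. -/
def cOf (F : IndexedForest) : ℤ → ℕ := fun i => F.rhoMS.count i

/-- The multiset of left-support labels of `F`. -/
def IndexedForest.lsuppMS (F : IndexedForest) : Multiset ℤ :=
  (F.trees.map (fun p => p.2.lsuppMS p.1)).sum

/-- Forest polynomial of a list of located trees. -/
noncomputable def polyL (ts : List (ℤ × BT)) : MvPolynomial ℕ ℚ :=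
  (ts.map (fun p => p.2.poly p.1)).prod

/-- The forest polynomial of an indexed forest. -/
noncomputable def IndexedForest.poly (F : IndexedForest) : MvPolynomial ℕ ℚ :=
  polyL F.trees

/-- Number of internal nodes of a forest. -/
def IndexedForest.size (F : IndexedForest) : ℕ :=
  (F.trees.map (fun p => p.2.size)).sum

/-- Generic labeled plane binary trees: internal nodes carry a label in `α`. -/
inductive GT (α : Type) where
  | leaf : GT α
  | node : α → GT α → GT α → GT α
deriving DecidableEq

/-- Underlying (unlabeled) shape. -/
def GT.shape {α : Type} : GT α → BT
  | .leaf => BT.leaf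
  | .node _ l r => BT.node l.shape r.shape

/-- Number of internal nodes. -/
def GT.size {α : Type} : GT α → ℕ
  | .leaf => 0
  | .node _ l r => l.size + r.size + 1

/-- Multiset of labels of internal nodes. -/
def GT.labels {α : Type} : GT α → Multiset α
  | .leaf => 0
  | .node k l r => k ::ₘ (l.labels + r.labels)

/-- Relabel a labeled tree. -/
def GT.map {α β : Type} (f : α → β) : GT α → GT β
  | .leaf => .leaf
  | .node k l r => .node (f k) (l.map f) (r.map f)

/-- The root label of a labeled tree (if any) is smaller than `k`. -/
def rootBelow (k : ℕ) : GT ℕ → Prop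
  | .leaf => True
  | .node m _ _ => m < k

/-- A decreasing labeling: labels strictly decrease away from the root. -/
def IsDec : GT ℕ → Prop
  | .leaf => True
  | .node k l r => rootBelow k l ∧ rootBelow k r ∧ IsDec l ∧ IsDec r

/-- Compatible sequences for the slide polynomial of a word `w = i_1⋯i_k`:
positive weakly decreasing sequences `a_1 ≥ ⋯ ≥ a_k` with `a_t ≤ i_t`, strictly
decreasing at positions where the word strictly decreases. -/
def slideSet (w : List ℤ) : Set (List ℕ) :=
  {a | a.length = w.length ∧ (∀ x ∈ a, 1 ≤ x) ∧
    (∀ t, t < w.length → ((a.getD t 0 : ℤ) ≤ w.getD t 0)) ∧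
    ∀ t, t + 1 < w.length →
      (a.getD (t + 1) 0 ≤ a.getD t 0 ∧
        (w.getD (t + 1) 0 < w.getD t 0 → a.getD (t + 1) 0 < a.getD t 0))}

/-- The slide polynomial `𝔉(i_1⋯i_k)`. -/
noncomputable def slide (w : List ℤ) : MvPolynomial ℕ ℚ :=
  ∑ᶠ a ∈ slideSet w, (a.map (fun i => (MvPolynomial.X i : MvPolynomial ℕ ℚ))).prod

/-- List of pairs `(ℓ-label, ρ_F-value)` over internal nodes of a labeled tree
whose inorder canonical labels start at `a`. -/
def GT.rhoPairs : GT ℕ → ℤ → List (ℕ × ℤ)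
  | .leaf, _ => []
  | .node k l r, a => (k, a) :: (l.rhoPairs a ++ r.rhoPairs (a + l.size + 1))

/-- The word `i_ℓ`: `ρ_F`-values read in increasing order of the labels
`1, 2, …, N` of the decreasing labeling. -/
def wordOf (pairs : List (ℕ × ℤ)) (N : ℕ) : List ℤ :=
  (List.range N).map (fun j => ((pairs.find? (fun q => q.1 = j + 1)).getD (0, 0)).2)


-- K = (value, rho, pos)
abbrev K := ℕ × ℤ × ℤ

def emb (x : K) : ℤ ×ₗ (ℤ ×ₗ ℤ) := toLex (-(x.1 : ℤ), toLex (x.2.1, x.2.2))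

lemma emb_inj : Function.Injective emb := by
  rintro ⟨v, ρ, p⟩ ⟨v', ρ', p'⟩ h
  have h' := toLex.injective.eq_iff.1 h
  simp only [Prod.mk.injEq] at h'
  have h2 := toLex.injective.eq_iff.1 h'.2
  simp only [Prod.mk.injEq] at h2
  have : v = v' := by exact_mod_cast neg_inj.1 h'.1
  simp [this, h2.1, h2.2]

def kLE (x y : K) : Prop := emb x ≤ emb y
def kLT (x y : K) : Prop := emb x < emb y

instance : DecidableRel kLE := fun x y => inferInstanceAs (Decidable (emb x ≤ emb y))
instance : IsTotal K kLE := ⟨fun x y => le_total (emb x) (emb y)⟩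
instance : IsTrans K kLE := ⟨fun _ _ _ h h' => le_trans h h'⟩
instance : IsAntisymm K kLE := ⟨fun x y h h' => emb_inj (le_antisymm h h')⟩

lemma lex3_le_iff (a b : ℤ × ℤ × ℤ) :
    toLex (a.1, toLex a.2) ≤ toLex (b.1, toLex b.2) ↔
      a.1 < b.1 ∨ a.1 = b.1 ∧ (a.2.1 < b.2.1 ∨ a.2.1 = b.2.1 ∧ a.2.2 ≤ b.2.2) := by
  rw [Prod.Lex.le_iff]
  constructor
  · rintro (h | ⟨h1, h2⟩)
    · exact Or.inl h
    · exact Or.inr ⟨h1, Prod.Lex.le_iff.1 h2⟩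
  · rintro (h | ⟨h1, h2⟩)
    · exact Or.inl h
    · exact Or.inr ⟨h1, Prod.Lex.le_iff.2 h2⟩

lemma kLE_iff (x y : K) : kLE x y ↔
    y.1 < x.1 ∨ x.1 = y.1 ∧ (x.2.1 < y.2.1 ∨ x.2.1 = y.2.1 ∧ x.2.2 ≤ y.2.2) := by
  show toLex (-(x.1:ℤ), toLex (x.2.1, x.2.2)) ≤ toLex (-(y.1:ℤ), toLex (y.2.1, y.2.2)) ↔ _
  rw [lex3_le_iff (-(x.1:ℤ), x.2.1, x.2.2) (-(y.1:ℤ), y.2.1, y.2.2)]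
  constructor
  · rintro (h | ⟨h1, h2⟩)
    · exact Or.inl (by exact_mod_cast neg_lt_neg_iff.1 h)
    · exact Or.inr ⟨by exact_mod_cast neg_inj.1 h1, h2⟩
  · rintro (h | ⟨h1, h2⟩)
    · exact Or.inl (by exact_mod_cast neg_lt_neg_iff.2 (by exact_mod_cast h))
    · exact Or.inr ⟨by rw [h1], h2⟩

lemma kLE.val_le {x y : K} (h : kLE x y) : y.1 ≤ x.1 := by
  rcases (kLE_iff x y).1 h with h | ⟨h1, _⟩
  · exact h.le
  · exact h1.ge

lemma kLE.rho_le {x y : K} (h : kLE x y) (hv : x.1 = y.1) : x.2.1 ≤ y.2.1 := by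
  rcases (kLE_iff x y).1 h with h | ⟨h1, h2 | h2⟩
  · omega
  · exact h2.le
  · exact h2.1.le

lemma kLE.pos_le {x y : K} (h : kLE x y) (hv : x.1 = y.1) (hr : x.2.1 = y.2.1) :
    x.2.2 ≤ y.2.2 := by
  rcases (kLE_iff x y).1 h with h | ⟨h1, h2 | h2⟩
  · omega
  · omega
  · exact h2.2

lemma kLE_of {x y : K} (hv : y.1 ≤ x.1) (hr : x.1 = y.1 → x.2.1 ≤ y.2.1)
    (hp : x.1 = y.1 → x.2.1 = y.2.1 → x.2.2 ≤ y.2.2) : kLE x y := by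
  rw [kLE_iff]
  rcases lt_or_eq_of_le hv with h | h
  · exact Or.inl h
  · rcases lt_or_eq_of_le (hr h.symm) with h2 | h2
    · exact Or.inr ⟨h.symm, Or.inl h2⟩
    · exact Or.inr ⟨h.symm, Or.inr ⟨h2, hp h.symm h2⟩⟩

lemma kLT_of_kLE_ne {x y : K} (h : kLE x y) (hne : x ≠ y) : kLT x y :=
  lt_of_le_of_ne h (fun he => hne (emb_inj he))

lemma kLT_asymm {x y : K} (h : kLT x y) (h' : kLT y x) : False := absurd h' (lt_asymm h)

open MvPolynomial

/-- annotated inorder list of internal nodes: (payload, rho, pos) -/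
def GT.ann {α : Type} : GT α → ℤ → List (α × ℤ × ℤ)
  | .leaf, _ => []
  | .node k l r, a => l.ann a ++ (k, a, a + l.size) :: r.ann (a + l.size + 1)

/-- relabel using payload, rho, pos -/
def GT.mapIdx {α β : Type} (f : α → ℤ → ℤ → β) : GT α → ℤ → GT β
  | .leaf, _ => .leaf
  | .node k l r, a =>
      .node (f k a (a + l.size)) (l.mapIdx f a) (r.mapIdx f (a + l.size + 1))

@[simp] lemma GT.size_map {α β : Type} (f : α → β) : ∀ (L : GT α), (L.map f).size = L.size
  | .leaf => rfl
  | .node k l r => by simp [GT.map, GT.size, size_map f l, size_map f r]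

@[simp] lemma GT.size_mapIdx {α β : Type} (f : α → ℤ → ℤ → β) :
    ∀ (L : GT α) (a : ℤ), (L.mapIdx f a).size = L.size
  | .leaf, _ => rfl
  | .node k l r, a => by
      simp [GT.mapIdx, GT.size, size_mapIdx f l, size_mapIdx f r]

@[simp] lemma GT.shape_map {α β : Type} (f : α → β) : ∀ (L : GT α), (L.map f).shape = L.shape
  | .leaf => rfl
  | .node k l r => by simp [GT.map, GT.shape, shape_map f l, shape_map f r]

@[simp] lemma GT.shape_mapIdx {α β : Type} (f : α → ℤ → ℤ → β) :
    ∀ (L : GT α) (a : ℤ), (L.mapIdx f a).shape = L.shape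
  | .leaf, _ => rfl
  | .node k l r, a => by simp [GT.mapIdx, GT.shape, shape_mapIdx f l, shape_mapIdx f r]

lemma GT.size_shape : ∀ (L : GT ℕ), L.shape.size = L.size
  | .leaf => rfl
  | .node k l r => by simp [GT.shape, GT.size, BT.size, size_shape l, size_shape r]

lemma GT.ann_map {α β : Type} (f : α → β) :
    ∀ (L : GT α) (a : ℤ), (L.map f).ann a = (L.ann a).map (fun x => (f x.1, x.2))
  | .leaf, _ => rfl
  | .node k l r, a => by
      simp [GT.map, GT.ann, ann_map f l, ann_map f r]

lemma GT.ann_mapIdx {α β : Type} (f : α → ℤ → ℤ → β) :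
    ∀ (L : GT α) (a : ℤ),
      (L.mapIdx f a).ann a = (L.ann a).map (fun x => (f x.1 x.2.1 x.2.2, x.2))
  | .leaf, _ => rfl
  | .node k l r, a => by
      simp [GT.mapIdx, GT.ann, ann_mapIdx f l, ann_mapIdx f r]

lemma GT.mapIdx_congr {α β : Type} (f g : α → ℤ → ℤ → β) :
    ∀ (L : GT α) (a : ℤ), (∀ x ∈ L.ann a, f x.1 x.2.1 x.2.2 = g x.1 x.2.1 x.2.2) →
      L.mapIdx f a = L.mapIdx g a
  | .leaf, _, _ => rfl
  | .node k l r, a, h => by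
      simp only [GT.mapIdx, GT.node.injEq]
      refine ⟨?_, ?_, ?_⟩
      · exact h (k, a, a + l.size) (by simp [GT.ann])
      · exact mapIdx_congr f g l a (fun x hx => h x (by simp [GT.ann, hx]))
      · exact mapIdx_congr f g r _ (fun x hx => h x (by simp [GT.ann, hx]))

lemma GT.mapIdx_payload {α : Type} :
    ∀ (L : GT α) (a : ℤ), L.mapIdx (fun k _ _ => k) a = L
  | .leaf, _ => rfl
  | .node k l r, a => by
      simp [GT.mapIdx, mapIdx_payload l, mapIdx_payload r]

lemma GT.mapIdx_map {α β γ : Type} (f : α → β) (g : β → ℤ → ℤ → γ) :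
    ∀ (L : GT α) (a : ℤ), (L.map f).mapIdx g a = L.mapIdx (fun k ρ p => g (f k) ρ p) a
  | .leaf, _ => rfl
  | .node k l r, a => by
      simp [GT.map, GT.mapIdx, mapIdx_map f g l, mapIdx_map f g r]

lemma GT.map_mapIdx {α β γ : Type} (f : α → ℤ → ℤ → β) (g : β → γ) :
    ∀ (L : GT α) (a : ℤ), (L.mapIdx f a).map g = L.mapIdx (fun k ρ p => g (f k ρ p)) a
  | .leaf, _ => rfl
  | .node k l r, a => by
      simp [GT.map, GT.mapIdx, map_mapIdx f g l, map_mapIdx f g r]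

@[simp] lemma GT.length_ann {α : Type} :
    ∀ (L : GT α) (a : ℤ), (L.ann a).length = L.size
  | .leaf, _ => rfl
  | .node k l r, a => by
      simp [GT.ann, GT.size, length_ann l, length_ann r]; omega

/-- labels as a multiset equal the payloads of ann -/
lemma GT.labels_eq_ann {α : Type} :
    ∀ (L : GT α) (a : ℤ), L.labels = (((L.ann a).map (fun x => x.1) : List α) : Multiset α)
  | .leaf, _ => rfl
  | .node k l r, a => by
      simp only [GT.labels, GT.ann, List.map_append, List.map_cons, ← Multiset.coe_add,
        ← Multiset.cons_coe]
      rw [labels_eq_ann l a, labels_eq_ann r (a + l.size + 1), Multiset.add_cons]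

/-- rhoPairs is a permutation of ann's (payload, rho) -/
lemma GT.rhoPairs_perm :
    ∀ (L : GT ℕ) (a : ℤ), (L.rhoPairs a).Perm ((L.ann a).map (fun x => (x.1, x.2.1)))
  | .leaf, _ => List.Perm.refl _
  | .node k l r, a => by
      simp only [GT.rhoPairs, GT.ann, List.map_append, List.map_cons]
      refine List.Perm.trans (List.Perm.cons _ ((rhoPairs_perm l a).append (rhoPairs_perm r _))) ?_
      exact (List.perm_middle (a := (k, a))).symm

/-- range of positions and rho values in ann -/
lemma GT.ann_range {α : Type} :
    ∀ (L : GT α) (a : ℤ), ∀ x ∈ L.ann a,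
      a ≤ x.2.1 ∧ x.2.1 ≤ x.2.2 ∧ x.2.2 < a + L.size
  | .leaf, _ => by simp [GT.ann]
  | .node k l r, a => by
      intro x hx
      simp only [GT.ann, List.mem_append, List.mem_cons] at hx
      rcases hx with hx | hx | hx
      · have := ann_range l a x hx
        simp only [GT.size]; push_cast; omega
      · subst hx; simp only [GT.size]; push_cast; omega
      · have := ann_range r (a + l.size + 1) x hx
        simp only [GT.size]; push_cast; omega

/-- positions in ann are pairwise distinct (they are even strictly increasing) -/
lemma GT.ann_pos_sorted {α : Type} :
    ∀ (L : GT α) (a : ℤ), (L.ann a).Pairwise (fun x y => x.2.2 < y.2.2)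
  | .leaf, _ => by simp [GT.ann]
  | .node k l r, a => by
      simp only [GT.ann]
      rw [List.pairwise_append]
      refine ⟨ann_pos_sorted l a, ?_, ?_⟩
      · rw [List.pairwise_cons]
        refine ⟨fun y hy => ?_, ann_pos_sorted r _⟩
        have := ann_range r (a + l.size + 1) y hy
        push_cast at this ⊢; omega
      · intro x hx y hy
        have h1 := ann_range l a x hx
        simp only [List.mem_cons] at hy
        rcases hy with hy | hy
        · subst hy; push_cast at h1 ⊢; omega
        · have := ann_range r (a + l.size + 1) y hy
          push_cast at this h1 ⊢; omega

lemma kLT_iff (x y : K) : kLT x y ↔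
    y.1 < x.1 ∨ x.1 = y.1 ∧ (x.2.1 < y.2.1 ∨ x.2.1 = y.2.1 ∧ x.2.2 < y.2.2) := by
  have h0 : kLT x y ↔ kLE x y ∧ x ≠ y :=
    ⟨fun h => ⟨h.le, fun he => absurd (he ▸ h) (lt_irrefl _)⟩,
     fun ⟨h, hne⟩ => lt_of_le_of_ne h (fun e => hne (emb_inj e))⟩
  rw [h0, kLE_iff]
  obtain ⟨v, ρ, p⟩ := x; obtain ⟨v', ρ', p'⟩ := y
  simp only [ne_eq, Prod.mk.injEq, not_and]
  constructor
  · rintro ⟨h1 | ⟨h1, h2 | h2⟩, hne⟩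
    · omega
    · omega
    · refine Or.inr ⟨h1, Or.inr ⟨h2.1, lt_of_le_of_ne h2.2 fun hp => ?_⟩⟩
      exact hne (by omega) (by omega) (by omega) |>.elim
  · rintro (h1 | ⟨h1, h2 | h2⟩)
    · exact ⟨Or.inl h1, by omega⟩
    · exact ⟨Or.inr ⟨h1, Or.inl h2⟩, by intro hv hr; omega⟩
    · exact ⟨Or.inr ⟨h1, Or.inr ⟨h2.1, h2.2.le⟩⟩, by intro hv hr hp; omega⟩

open MvPolynomial

/-- valid flagged fillings, mirrors `polyAux` -/
def VF : GT ℕ → ℤ → ℕ → Prop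
  | .leaf, _, _ => True
  | .node k l r, a, lo => lo ≤ k ∧ k ≤ a.toNat ∧ VF l a k ∧ VF r (a + l.size + 1) (k + 1)

noncomputable def mono (G : GT ℕ) : MvPolynomial ℕ ℚ :=
  (G.labels.map (fun i => (X i : MvPolynomial ℕ ℚ))).prod

@[simp] lemma mono_leaf : mono GT.leaf = 1 := rfl

lemma mono_node (k : ℕ) (l r : GT ℕ) :
    mono (GT.node k l r) = X k * mono l * mono r := by
  simp [mono, GT.labels, mul_assoc]

noncomputable def fills : BT → ℤ → ℕ → Finset (GT ℕ)
  | .leaf, _, _ => {GT.leaf}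
  | .node l r, a, lo =>
      (Finset.Icc lo a.toNat).biUnion fun k =>
        ((fills l a k) ×ˢ (fills r (a + l.size + 1) (k + 1))).image
          fun g => GT.node k g.1 g.2

lemma mem_fills : ∀ (t : BT) (a : ℤ) (lo : ℕ) (G : GT ℕ),
    G ∈ fills t a lo ↔ G.shape = t ∧ VF G a lo := by
  intro t
  induction t with
  | leaf =>
      intro a lo G
      cases G with
      | leaf => simp [fills, GT.shape, VF]
      | node k l r => simp [fills, GT.shape, VF]
  | node l r ihl ihr =>
      intro a lo G
      cases G with
      | leaf =>
          simp only [fills, Finset.mem_biUnion, Finset.mem_image, Finset.mem_product]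
          constructor
          · rintro ⟨k, _, ⟨g, _, h⟩⟩; cases h
          · rintro ⟨h, -⟩; cases h
      | node k' gl gr =>
          simp only [fills, Finset.mem_biUnion, Finset.mem_image, Finset.mem_product,
            Finset.mem_Icc, GT.shape, VF]
          constructor
          · rintro ⟨k, hk, ⟨g, ⟨h1, h2⟩, h⟩⟩
            obtain ⟨g1, g2⟩ := g
            injection h with e1 e2 e3
            subst e1; subst e2; subst e3
            obtain ⟨hs1, hv1⟩ := (ihl a k g1).1 h1
            obtain ⟨hs2, hv2⟩ := (ihr (a + l.size + 1) (k + 1) g2).1 h2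
            have hsz : (g1.size : ℤ) = (l.size : ℤ) := by
              rw [← hs1, GT.size_shape]
            refine ⟨by rw [hs1, hs2], hk.1, hk.2, hv1, ?_⟩
            simpa only [hsz] using hv2
          · rintro ⟨hs, hk1, hk2, hvl, hvr⟩
            injection hs with h1 h2
            have hsz : (gl.size : ℤ) = (l.size : ℤ) := by
              rw [← h1, GT.size_shape]
            refine ⟨k', ⟨hk1, hk2⟩, ⟨(gl, gr), ⟨?_, ?_⟩, rfl⟩⟩
            · exact (ihl a k' gl).2 ⟨h1, hvl⟩
            · refine (ihr (a + l.size + 1) (k' + 1) gr).2 ⟨h2, ?_⟩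
              simpa only [hsz] using hvr

lemma polyAux_eq_sum : ∀ (t : BT) (a : ℤ) (lo : ℕ),
    BT.polyAux t a lo = ∑ G ∈ fills t a lo, mono G := by
  intro t
  induction t with
  | leaf => intro a lo; simp [BT.polyAux, fills]
  | node l r ihl ihr =>
      intro a lo
      rw [BT.polyAux, fills, Finset.sum_biUnion]
      · refine Finset.sum_congr rfl fun k _ => ?_
        rw [Finset.sum_image (by rintro ⟨g1, g2⟩ _ ⟨h1, h2⟩ _ h; simpa using h)]
        rw [ihl, ihr, Finset.sum_product, mul_assoc, Finset.sum_mul_sum, Finset.mul_sum]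
        refine Finset.sum_congr rfl fun g1 _ => ?_
        rw [Finset.mul_sum]
        refine Finset.sum_congr rfl fun g2 _ => ?_
        rw [mono_node]; ring
      · intro k1 h1 k2 h2 hne
        simp only [Finset.disjoint_left, Finset.mem_image, Finset.mem_product]
        rintro G ⟨g, _, rfl⟩ ⟨g', _, h⟩
        injection h with e1 _ _
        exact hne (by rw [e1])

lemma VF_bounds : ∀ (G : GT ℕ) (a : ℤ) (lo : ℕ), 1 ≤ lo → VF G a lo →
    ∀ x ∈ G.ann a, 1 ≤ x.1 ∧ (x.1 : ℤ) ≤ x.2.1 := by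
  intro G
  induction G with
  | leaf => simp [GT.ann]
  | node k l r ihl ihr =>
      intro a lo hlo hv x hx
      obtain ⟨h1, h2, h3, h4⟩ := hv
      simp only [GT.ann, List.mem_append, List.mem_cons] at hx
      rcases hx with hx | hx | hx
      · exact ihl a k (by omega) h3 x hx
      · subst hx; simp only; omega
      · exact ihr _ (k + 1) (by omega) h4 x hx

lemma mem_labels_of_mem_ann {α : Type} {L : GT α} {a : ℤ} {x : α × ℤ × ℤ}
    (hx : x ∈ L.ann a) : x.1 ∈ L.labels := by
  rw [GT.labels_eq_ann L a]
  exact Multiset.mem_coe.2 (List.mem_map_of_mem hx)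

lemma isDec_labels_lt : ∀ (L : GT ℕ), IsDec L → ∀ (k : ℕ), rootBelow k L →
    ∀ m ∈ L.labels, m < k := by
  intro L
  induction L with
  | leaf => simp [GT.labels]
  | node k' l r ihl ihr =>
      intro hd k hb m hm
      obtain ⟨hbl, hbr, hdl, hdr⟩ := hd
      simp only [GT.labels, Multiset.mem_cons, Multiset.mem_add] at hm
      have hk' : k' < k := hb
      rcases hm with rfl | hm | hm
      · exact hk'
      · exact lt_trans (ihl hdl k' hbl m hm) hk'
      · exact lt_trans (ihr hdr k' hbr m hm) hk'

/-- equal rho implies left-chain comparability -/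
lemma rho_trichotomy : ∀ (L : GT ℕ), IsDec L → ∀ (a : ℤ),
    ∀ x ∈ L.ann a, ∀ y ∈ L.ann a, x.2.1 = y.2.1 →
      x = y ∨ (x.1 < y.1 ∧ x.2.2 < y.2.2) ∨ (y.1 < x.1 ∧ y.2.2 < x.2.2) := by
  intro L
  induction L with
  | leaf => simp [GT.ann]
  | node k l r ihl ihr =>
      intro hd a x hx y hy hρ
      obtain ⟨hbl, hbr, hdl, hdr⟩ := hd
      simp only [GT.ann, List.mem_append, List.mem_cons] at hx hy
      have hrangel := fun z hz => GT.ann_range l a z hz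
      have hranger := fun z hz => GT.ann_range r (a + l.size + 1) z hz
      rcases hx with hx | hx | hx <;> rcases hy with hy | hy | hy
      · exact ihl hdl a x hx y hy hρ
      · -- x in l, y is root
        subst hy
        have h1 := hrangel x hx
        have h2 : x.1 < k := isDec_labels_lt l hdl k hbl x.1 (mem_labels_of_mem_ann hx)
        exact Or.inr (Or.inl ⟨h2, by simp only; omega⟩)
      · -- x in l, y in r : rho ranges disjoint
        have h1 := hrangel x hx
        have h2 := hranger y hy
        omega
      · -- x root, y in l
        subst hx
        have h1 := hrangel y hy
        have h2 : y.1 < k := isDec_labels_lt l hdl k hbl y.1 (mem_labels_of_mem_ann hy)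
        exact Or.inr (Or.inr ⟨h2, by simp only; omega⟩)
      · subst hx; subst hy; exact Or.inl rfl
      · -- x root, y in r
        subst hx
        have h2 := hranger y hy
        simp only at hρ
        omega
      · have h1 := hrangel y hy
        have h2 := hranger x hx
        omega
      · subst hy
        have h2 := hranger x hx
        simp only at hρ
        omega
      · exact ihr hdr _ x hx y hy hρ

def gapR (p q : ℤ × BT) : Prop := p.1 + (p.2.size : ℤ) + 1 ≤ q.1

instance : IsTrans (ℤ × BT) gapR :=
  ⟨fun p q s h1 h2 => by unfold gapR at *; omega⟩

/-- forest-level annotated node list -/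
def annF : List (GT ℕ) → List (ℤ × BT) → List K
  | L :: Ls, p :: ts => GT.ann L p.1 ++ annF Ls ts
  | _, _ => []

@[simp] lemma annF_nil_left (ts : List (ℤ × BT)) : annF [] ts = [] := by cases ts <;> rfl
@[simp] lemma annF_nil_right (Ls : List (GT ℕ)) : annF Ls [] = [] := by cases Ls <;> rfl
@[simp] lemma annF_cons (L : GT ℕ) (Ls : List (GT ℕ)) (p : ℤ × BT) (ts : List (ℤ × BT)) :
    annF (L :: Ls) (p :: ts) = GT.ann L p.1 ++ annF Ls ts := rfl

/-- shape compatibility -/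
def SH (Ls : List (GT ℕ)) (ts : List (ℤ × BT)) : Prop :=
  List.Forall₂ (fun (L : GT ℕ) (p : ℤ × BT) => L.shape = p.2) Ls ts

lemma annF_range : ∀ (Ls : List (GT ℕ)) (ts : List (ℤ × BT)), SH Ls ts →
    ∀ x ∈ annF Ls ts, ∃ p ∈ ts, p.1 ≤ x.2.1 ∧ x.2.1 ≤ x.2.2 ∧ x.2.2 < p.1 + (p.2.size : ℤ)
  | [], ts, _ => by simp
  | L :: Ls, [], h => by cases h
  | L :: Ls, p :: ts, h => by
      intro x hx
      obtain ⟨hsh, htail⟩ := List.forall₂_cons.1 h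
      simp only [annF_cons, List.mem_append] at hx
      rcases hx with hx | hx
      · refine ⟨p, by simp, ?_⟩
        have := GT.ann_range L p.1 x hx
        have hsz : (L.size : ℤ) = (p.2.size : ℤ) := by rw [← hsh, GT.size_shape]
        omega
      · obtain ⟨q, hq, hb⟩ := annF_range Ls ts htail x hx
        exact ⟨q, by simp [hq], hb⟩

lemma annF_lower : ∀ (Ls : List (GT ℕ)) (ts : List (ℤ × BT)), SH Ls ts →
    ∀ (c : ℤ), (∀ p ∈ ts, c ≤ p.1) → ∀ x ∈ annF Ls ts, c ≤ x.2.1 := by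
  intro Ls ts h c hc x hx
  obtain ⟨p, hp, hb⟩ := annF_range Ls ts h x hx
  exact le_trans (hc p hp) hb.1

lemma annF_pos_sorted : ∀ (Ls : List (GT ℕ)) (ts : List (ℤ × BT)), SH Ls ts →
    ts.Pairwise gapR → (annF Ls ts).Pairwise (fun x y => x.2.2 < y.2.2)
  | [], ts, _, _ => by simp
  | L :: Ls, [], h, _ => by cases h
  | L :: Ls, p :: ts, h, hg => by
      obtain ⟨hsh, htail⟩ := List.forall₂_cons.1 h
      rw [List.pairwise_cons] at hg
      rw [annF_cons, List.pairwise_append]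
      refine ⟨GT.ann_pos_sorted L p.1, annF_pos_sorted Ls ts htail hg.2, ?_⟩
      intro x hx y hy
      have h1 := GT.ann_range L p.1 x hx
      have h2 : p.1 + (p.2.size : ℤ) + 1 ≤ y.2.1 :=
        annF_lower Ls ts htail _ (fun q hq => hg.1 q hq) y hy
      obtain ⟨q, hq, hb⟩ := annF_range Ls ts htail y hy
      have hsz : (L.size : ℤ) = (p.2.size : ℤ) := by rw [← hsh, GT.size_shape]
      omega

/-- forest-level trichotomy for equal rho -/
lemma annF_trichotomy : ∀ (Ls : List (GT ℕ)) (ts : List (ℤ × BT)),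
    List.Forall₂ (fun (L : GT ℕ) (p : ℤ × BT) => L.shape = p.2 ∧ IsDec L) Ls ts →
    ts.Pairwise gapR →
    ∀ x ∈ annF Ls ts, ∀ y ∈ annF Ls ts, x.2.1 = y.2.1 →
      x = y ∨ (x.1 < y.1 ∧ x.2.2 < y.2.2) ∨ (y.1 < x.1 ∧ y.2.2 < x.2.2)
  | [], ts, _, _ => by simp
  | L :: Ls, [], h, _ => by cases h
  | L :: Ls, p :: ts, h, hg => by
      obtain ⟨⟨hsh, hdec⟩, htail⟩ := List.forall₂_cons.1 h
      have htailSH : SH Ls ts := htail.imp (fun _ _ h => h.1)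
      rw [List.pairwise_cons] at hg
      intro x hx y hy hρ
      simp only [annF_cons, List.mem_append] at hx hy
      have hcross : ∀ z ∈ GT.ann L p.1, ∀ w ∈ annF Ls ts, z.2.1 ≠ w.2.1 := by
        intro z hz w hw
        have h1 := GT.ann_range L p.1 z hz
        have h2 := annF_lower Ls ts htailSH _ (fun q hq => hg.1 q hq) w hw
        have hsz : (L.size : ℤ) = (p.2.size : ℤ) := by rw [← hsh, GT.size_shape]
        omega
      rcases hx with hx | hx <;> rcases hy with hy | hy
      · exact rho_trichotomy L hdec p.1 x hx y hy hρ
      · exact absurd hρ (hcross x hx y hy)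
      · exact absurd hρ.symm (hcross y hy x hx)
      · exact annF_trichotomy Ls ts htail hg.2 x hx y hy hρ

lemma annF_bounds : ∀ (Gs : List (GT ℕ)) (ts : List (ℤ × BT)),
    List.Forall₂ (fun (G : GT ℕ) (p : ℤ × BT) => G.shape = p.2 ∧ VF G p.1 1) Gs ts →
    ∀ x ∈ annF Gs ts, 1 ≤ x.1 ∧ (x.1 : ℤ) ≤ x.2.1
  | [], ts, _ => by simp
  | G :: Gs, [], h => by cases h
  | G :: Gs, p :: ts, h => by
      obtain ⟨⟨hsh, hvf⟩, htail⟩ := List.forall₂_cons.1 h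
      intro x hx
      simp only [annF_cons, List.mem_append] at hx
      rcases hx with hx | hx
      · exact VF_bounds G p.1 1 le_rfl hvf x hx
      · exact annF_bounds Gs ts htail x hx

lemma labelsF_eq_annF : ∀ (Ls : List (GT ℕ)) (ts : List (ℤ × BT)), SH Ls ts →
    ((Ls.map GT.labels).sum : Multiset ℕ) = (((annF Ls ts).map (fun x => x.1) : List ℕ) : Multiset ℕ)
  | [], ts, _ => by cases ts <;> simp
  | L :: Ls, [], h => by cases h
  | L :: Ls, p :: ts, h => by
      obtain ⟨hsh, htail⟩ := List.forall₂_cons.1 h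
      simp only [List.map_cons, List.sum_cons, annF_cons, List.map_append, ← Multiset.coe_add]
      rw [labelsF_eq_annF Ls ts htail, GT.labels_eq_ann L p.1]

lemma rhoPairsF_perm : ∀ (Ls : List (GT ℕ)) (ts : List (ℤ × BT)), SH Ls ts →
    ((List.zipWith (fun (L : GT ℕ) (p : ℤ × BT) => L.rhoPairs p.1) Ls ts).flatten).Perm
      ((annF Ls ts).map (fun x => (x.1, x.2.1)))
  | [], ts, _ => by cases ts <;> simp
  | L :: Ls, [], h => by cases h
  | L :: Ls, p :: ts, h => by
      obtain ⟨hsh, htail⟩ := List.forall₂_cons.1 h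
      simp only [List.zipWith_cons_cons, List.flatten_cons, annF_cons, List.map_append]
      exact (GT.rhoPairs_perm L p.1).append (rhoPairsF_perm Ls ts htail)

lemma annF_length : ∀ (Ls : List (GT ℕ)) (ts : List (ℤ × BT)), SH Ls ts →
    (annF Ls ts).length = (ts.map (fun p => p.2.size)).sum
  | [], ts, h => by cases h; simp
  | L :: Ls, [], h => by cases h
  | L :: Ls, p :: ts, h => by
      obtain ⟨hsh, htail⟩ := List.forall₂_cons.1 h
      simp only [annF_cons, List.length_append, GT.length_ann, List.map_cons, List.sum_cons]
      rw [annF_length Ls ts htail, ← GT.size_shape, hsh]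

lemma annF_map (f : ℕ → ℕ) : ∀ (Ls : List (GT ℕ)) (ts : List (ℤ × BT)),
    annF (Ls.map (GT.map f)) ts = (annF Ls ts).map (fun x => (f x.1, x.2))
  | [], ts => by cases ts <;> simp
  | L :: Ls, [] => by simp
  | L :: Ls, p :: ts => by
      simp only [List.map_cons, annF_cons, List.map_append]
      rw [GT.ann_map, annF_map f Ls ts]

/-- the standardization relabeling at forest level -/
def stdL (f : ℕ → ℤ → ℤ → ℕ) : List (GT ℕ) → List (ℤ × BT) → List (GT ℕ)
  | G :: Gs, p :: ts => G.mapIdx f p.1 :: stdL f Gs ts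
  | _, _ => []

lemma annF_stdL (f : ℕ → ℤ → ℤ → ℕ) : ∀ (Gs : List (GT ℕ)) (ts : List (ℤ × BT)),
    annF (stdL f Gs ts) ts = (annF Gs ts).map (fun x => (f x.1 x.2.1 x.2.2, x.2))
  | [], ts => by cases ts <;> simp [stdL]
  | G :: Gs, [] => by simp [stdL]
  | G :: Gs, p :: ts => by
      simp only [stdL, annF_cons, List.map_append]
      rw [GT.ann_mapIdx, annF_stdL f Gs ts]


instance (priority := 2000) instBEqK : BEq K := instBEqOfDecidableEq

lemma indexOf_getElem_self {α : Type} [DecidableEq α] {S : List α} (hnd : S.Nodup)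
    {i : ℕ} (hi : i < S.length) : S.idxOf S[i] = i := by
  have h1 : S.idxOf S[i] < S.length := List.idxOf_lt_length_iff.2 (List.getElem_mem hi)
  have h2 : S[S.idxOf S[i]] = S[i] := List.getElem_idxOf h1
  exact (hnd.getElem_inj_iff).1 h2

lemma sorted_indexOf_lt {S : List K} (hs : List.Pairwise kLE S) (hnd : S.Nodup)
    {x y : K} (hx : x ∈ S) (hy : y ∈ S) (h : kLT x y) :
    S.idxOf x < S.idxOf y := by
  have hix : S.idxOf x < S.length := List.idxOf_lt_length_iff.2 hx
  have hiy : S.idxOf y < S.length := List.idxOf_lt_length_iff.2 hy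
  rcases lt_trichotomy (S.idxOf x) (S.idxOf y) with hlt | heq | hgt
  · exact hlt
  · exfalso
    have : x = y := by
      have e3 : S[List.idxOf x S] = S[List.idxOf y S] := by
        congr 1
      rw [← List.getElem_idxOf hix, ← List.getElem_idxOf hiy]
      exact e3
    exact absurd (this ▸ h) (lt_irrefl _)
  · exfalso
    have hle : kLE y x := by
      have := List.pairwise_iff_getElem.1 hs _ _ hiy hix hgt
      rwa [List.getElem_idxOf hiy, List.getElem_idxOf hix] at this
    exact absurd (lt_of_lt_of_le h hle) (lt_irrefl _)

lemma map_indexOf_range {α : Type} [DecidableEq α] {S : List α} (hnd : S.Nodup) :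
    S.map (fun x => S.idxOf x) = List.range S.length := by
  refine List.ext_getElem (by simp) fun n h1 h2 => ?_
  simp only [List.getElem_map, List.getElem_range]
  exact indexOf_getElem_self hnd (by simpa using h1)

lemma range_map_getD {α : Type} (a : List α) (d : α) :
    (List.range a.length).map (fun j => a.getD j d) = a := by
  refine List.ext_getElem (by simp) fun n h1 h2 => ?_
  simp only [List.getElem_map, List.getElem_range]
  exact List.getD_eq_getElem a d h2

lemma find?_unique {l : List (ℕ × ℤ)} {t : ℕ} {ρ : ℤ}
    (hmem : (t, ρ) ∈ l) (huniq : ∀ q ∈ l, q.1 = t → q = (t, ρ)) :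
    ((l.find? (fun q => q.1 = t)).getD (0, 0)).2 = ρ := by
  have hsome : (l.find? (fun q => q.1 = t)).isSome := by
    rw [List.find?_isSome]
    exact ⟨(t, ρ), hmem, by simp⟩
  obtain ⟨q, hq⟩ := Option.isSome_iff_exists.1 hsome
  have hq1 : q.1 = t := by simpa using List.find?_some hq
  have := huniq q (List.mem_of_find?_eq_some hq) hq1
  rw [hq, Option.getD_some, this]

/-- general spec for `wordOf`: if pairs is a permutation of (label, rho) over a list W
whose j-th element has label j+1, then the word is the rho-list of W. -/
lemma word_spec (pairs : List (ℕ × ℤ)) (W : List K)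
    (hperm : pairs.Perm (W.map (fun x => (x.1, x.2.1))))
    (hlab : ∀ j (h : j < W.length), (W[j]).1 = j + 1) :
    wordOf pairs W.length = W.map (fun x => x.2.1) := by
  refine List.ext_getElem (by simp [wordOf]) fun n h1 h2 => ?_
  simp only [wordOf, List.getElem_map, List.getElem_range]
  have hn : n < W.length := by simpa using h2
  have hmem : ((n + 1 : ℕ), (W[n]).2.1) ∈ pairs := by
    rw [hperm.mem_iff]
    refine List.mem_map.2 ⟨W[n], List.getElem_mem hn, ?_⟩
    rw [hlab n hn]
  have huniq : ∀ q ∈ pairs, q.1 = n + 1 → q = ((n + 1 : ℕ), (W[n]).2.1) := by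
    intro q hq hq1
    rw [hperm.mem_iff] at hq
    obtain ⟨x, hxW, rfl⟩ := List.mem_map.1 hq
    obtain ⟨i, hi, rfl⟩ := List.getElem_of_mem hxW
    simp only at hq1 ⊢
    rw [hlab i hi] at hq1
    have : i = n := by omega
    subst this
    rw [hlab i hi]
  exact find?_unique hmem huniq

lemma sorted_getElem_kLE {S : List K} (hs : List.Pairwise kLE S)
    {i j : ℕ} (hi : i < S.length) (hj : j < S.length) (hij : i < j) :
    kLE S[i] S[j] := List.pairwise_iff_getElem.1 hs _ _ hi hj hij

open MvPolynomial in
noncomputable def monoS (a : List ℕ) : MvPolynomial ℕ ℚ :=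
  (a.map (fun i => (X i : MvPolynomial ℕ ℚ))).prod

noncomputable def monoL (Gs : List (GT ℕ)) : MvPolynomial ℕ ℚ := (Gs.map mono).prod

noncomputable def fillsL : List (ℤ × BT) → Finset (List (GT ℕ))
  | [] => {[]}
  | p :: ts => ((fills p.2 p.1 1) ×ˢ fillsL ts).image fun g => g.1 :: g.2

lemma mem_fillsL : ∀ (ts : List (ℤ × BT)) (Gs : List (GT ℕ)),
    Gs ∈ fillsL ts ↔
      List.Forall₂ (fun (G : GT ℕ) (p : ℤ × BT) => G.shape = p.2 ∧ VF G p.1 1) Gs ts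
  | [], Gs => by
      cases Gs <;> simp [fillsL]
  | p :: ts, Gs => by
      cases Gs with
      | nil =>
          simp only [fillsL, Finset.mem_image, Finset.mem_product]
          constructor
          · rintro ⟨g, _, h⟩; cases h
          · intro h; cases h
      | cons G Gs =>
          simp only [fillsL, Finset.mem_image, Finset.mem_product, List.forall₂_cons]
          constructor
          · rintro ⟨g, ⟨h1, h2⟩, h⟩
            injection h with e1 e2
            subst e1; subst e2
            exact ⟨(mem_fills _ _ _ _).1 h1, (mem_fillsL ts _).1 h2⟩
          · rintro ⟨h1, h2⟩
            exact ⟨(G, Gs), ⟨(mem_fills _ _ _ _).2 h1, (mem_fillsL ts Gs).2 h2⟩, rfl⟩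

lemma polyL_eq_sum : ∀ (ts : List (ℤ × BT)), polyL ts = ∑ Gs ∈ fillsL ts, monoL Gs
  | [] => by simp [polyL, fillsL, monoL]
  | p :: ts => by
      rw [polyL, List.map_cons, List.prod_cons]
      have : (ts.map (fun p => p.2.poly p.1)).prod = polyL ts := rfl
      rw [this, polyL_eq_sum ts, BT.poly, polyAux_eq_sum, fillsL]
      rw [Finset.sum_image (by rintro ⟨g1, g2⟩ _ ⟨h1, h2⟩ _ h; simpa using h)]
      rw [Finset.sum_product, Finset.sum_mul_sum]
      refine Finset.sum_congr rfl fun g1 _ => ?_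
      refine Finset.sum_congr rfl fun g2 _ => ?_
      simp [monoL]

def allLists : ℕ → ℕ → Finset (List ℕ)
  | 0, _ => {[]}
  | n + 1, B => (Finset.range (B + 1)).biUnion fun x => (allLists n B).image (x :: ·)

lemma mem_allLists : ∀ (n B : ℕ) (l : List ℕ),
    l ∈ allLists n B ↔ l.length = n ∧ ∀ x ∈ l, x ≤ B
  | 0, B, l => by cases l <;> simp [allLists]
  | n + 1, B, l => by
      cases l with
      | nil =>
          simp only [allLists, Finset.mem_biUnion, Finset.mem_image, Finset.mem_range]
          constructor
          · rintro ⟨x, _, y, _, h⟩; cases h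
          · rintro ⟨h, -⟩; cases h
      | cons x l =>
          simp only [allLists, Finset.mem_biUnion, Finset.mem_image, Finset.mem_range,
            List.length_cons, List.mem_cons]
          constructor
          · rintro ⟨k, hk, y, hy, h⟩
            injection h with e1 e2
            subst e1; subst e2
            obtain ⟨h1, h2⟩ := (mem_allLists n B y).1 hy
            refine ⟨by omega, ?_⟩
            rintro z (rfl | hz)
            · omega
            · exact h2 z hz
          · rintro ⟨h1, h2⟩
            exact ⟨x, by have := h2 x (Or.inl rfl); omega,
              l, (mem_allLists n B l).2 ⟨by omega, fun z hz => h2 z (Or.inr hz)⟩, rfl⟩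

def allGT : BT → ℕ → Finset (GT ℕ)
  | .leaf, _ => {GT.leaf}
  | .node l r, B =>
      (Finset.range B).biUnion fun k =>
        ((allGT l B) ×ˢ (allGT r B)).image fun g => GT.node k g.1 g.2

lemma mem_allGT : ∀ (t : BT) (B : ℕ) (G : GT ℕ),
    G ∈ allGT t B ↔ G.shape = t ∧ ∀ m ∈ G.labels, m < B
  | .leaf, B, G => by
      cases G with
      | leaf => simp [allGT, GT.shape, GT.labels]
      | node k l r => simp [allGT, GT.shape]
  | .node l r, B, G => by
      cases G with
      | leaf =>
          simp only [allGT, Finset.mem_biUnion, Finset.mem_image, Finset.mem_product]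
          constructor
          · rintro ⟨k, _, g, _, h⟩; cases h
          · rintro ⟨h, -⟩; cases h
      | node k gl gr =>
          simp only [allGT, Finset.mem_biUnion, Finset.mem_image, Finset.mem_product,
            Finset.mem_range, GT.shape, GT.labels]
          constructor
          · rintro ⟨k', hk', g, ⟨h1, h2⟩, h⟩
            injection h with e1 e2 e3
            subst e1; subst e2; subst e3
            obtain ⟨hs1, hb1⟩ := (mem_allGT l B g.1).1 h1
            obtain ⟨hs2, hb2⟩ := (mem_allGT r B g.2).1 h2
            refine ⟨by rw [hs1, hs2], ?_⟩
            intro m hm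
            simp only [Multiset.mem_cons, Multiset.mem_add] at hm
            rcases hm with rfl | hm | hm
            · exact hk'
            · exact hb1 m hm
            · exact hb2 m hm
          · rintro ⟨hs, hb⟩
            injection hs with e1 e2
            refine ⟨k, hb k (by simp), (gl, gr), ⟨?_, ?_⟩, rfl⟩
            · exact (mem_allGT l B gl).2 ⟨e1, fun m hm => hb m (by simp [hm])⟩
            · exact (mem_allGT r B gr).2 ⟨e2, fun m hm => hb m (by simp [hm])⟩

def allLsF : List (ℤ × BT) → ℕ → Finset (List (GT ℕ))
  | [], _ => {[]}
  | p :: ts, B => ((allGT p.2 B) ×ˢ allLsF ts B).image fun g => g.1 :: g.2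

lemma mem_allLsF : ∀ (ts : List (ℤ × BT)) (B : ℕ) (Ls : List (GT ℕ)),
    Ls ∈ allLsF ts B ↔
      List.Forall₂ (fun (L : GT ℕ) (p : ℤ × BT) =>
        L.shape = p.2 ∧ ∀ m ∈ L.labels, m < B) Ls ts
  | [], B, Ls => by cases Ls <;> simp [allLsF]
  | p :: ts, B, Ls => by
      cases Ls with
      | nil =>
          simp only [allLsF, Finset.mem_image, Finset.mem_product]
          constructor
          · rintro ⟨g, _, h⟩; cases h
          · intro h; cases h
      | cons L Ls =>
          simp only [allLsF, Finset.mem_image, Finset.mem_product, List.forall₂_cons]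
          constructor
          · rintro ⟨g, ⟨h1, h2⟩, h⟩
            injection h with e1 e2
            subst e1; subst e2
            exact ⟨(mem_allGT _ _ _).1 h1, (mem_allLsF ts B _).1 h2⟩
          · rintro ⟨h1, h2⟩
            exact ⟨(L, Ls), ⟨(mem_allGT _ _ _).2 h1, (mem_allLsF ts B Ls).2 h2⟩, rfl⟩

def wbound (w : List ℤ) : ℕ := (w.map Int.toNat).sum

lemma le_wbound : ∀ (w : List ℤ), ∀ z ∈ w, z.toNat ≤ wbound w
  | [], z => by simp
  | y :: w, z => by
      intro hz
      rcases List.mem_cons.1 hz with rfl | hz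
      · simp [wbound]
      · have := le_wbound w z hz
        simp only [wbound, List.map_cons, List.sum_cons] at *
        omega

lemma ms_mem_sum : ∀ (l : List (Multiset ℕ)) (s : Multiset ℕ), s ∈ l →
    ∀ m ∈ s, m ∈ l.sum
  | [], s => by simp
  | t :: l, s => by
      intro hs m hm
      rcases List.mem_cons.1 hs with rfl | hs
      · simp only [List.sum_cons, Multiset.mem_add]; exact Or.inl hm
      · simp only [List.sum_cons, Multiset.mem_add]
        exact Or.inr (ms_mem_sum l s hs m hm)

open Classical in
noncomputable def slideFin (w : List ℤ) : Finset (List ℕ) :=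
  (allLists w.length (wbound w)).filter (· ∈ slideSet w)

lemma coe_slideFin (w : List ℤ) : ↑(slideFin w) = slideSet w := by
  classical
  ext a
  simp only [slideFin, Finset.coe_filter, Set.mem_setOf_eq, Finset.mem_coe]
  constructor
  · rintro ⟨-, h⟩; exact h
  · intro h
    refine ⟨(mem_allLists _ _ _).2 ⟨h.1, ?_⟩, h⟩
    intro x hx
    obtain ⟨t, ht, rfl⟩ := List.getElem_of_mem hx
    obtain ⟨hlen, hpos, hle, hadj⟩ := h
    have ht' : t < w.length := by omega
    have h1 := hle t ht'
    rw [List.getD_eq_getElem a 0 ht] at h1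
    have h2 : (w.getD t 0) = w[t] := List.getD_eq_getElem w 0 ht'
    have h3 : w[t] ∈ w := List.getElem_mem ht'
    have := le_wbound w _ h3
    omega

lemma slide_eq_sum (w : List ℤ) : slide w = ∑ a ∈ slideFin w, monoS a := by
  rw [slide, ← coe_slideFin, finsum_mem_coe_finset]
  rfl

section seqs
variable {w : List ℤ} {a : List ℕ}

lemma slideSet_antitone (ha : a ∈ slideSet w) (t : ℕ) :
    ∀ s, t ≤ s → s < w.length → a.getD s 0 ≤ a.getD t 0 := by
  obtain ⟨hlen, hpos, hle, hadj⟩ := ha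
  intro s
  induction s with
  | zero =>
      intro h1 _
      have : t = 0 := Nat.le_zero.mp h1
      subst this; exact le_rfl
  | succ s ih =>
      intro h1 h2
      rcases Nat.eq_or_lt_of_le h1 with rfl | h
      · exact le_rfl
      · have ha1 := (hadj s h2).1
        have ha2 := ih (by omega) (by omega)
        omega

lemma slideSet_run (ha : a ∈ slideSet w) (t : ℕ) :
    ∀ s, t ≤ s → s < w.length → a.getD s 0 = a.getD t 0 →
      w.getD t 0 ≤ w.getD s 0 := by
  have hanti := slideSet_antitone ha t
  obtain ⟨hlen, hpos, hle, hadj⟩ := ha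
  intro s
  induction s with
  | zero =>
      intro h1 _ _
      have : t = 0 := Nat.le_zero.mp h1
      subst this; exact le_rfl
  | succ s ih =>
      intro h1 h2 heq
      rcases Nat.eq_or_lt_of_le h1 with rfl | h
      · exact le_rfl
      · have ha1 := (hadj s h2).1
        have ha2 := hanti s (by omega) (by omega)
        have h3 : a.getD s 0 = a.getD t 0 := by omega
        have h4 := ih (by omega) (by omega) h3
        by_contra hc
        push_neg at hc
        have h5 : w.getD (s + 1) 0 < w.getD s 0 := by omega
        have := (hadj s h2).2 h5
        omega

lemma slideSet_strict (ha : a ∈ slideSet w) :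
    ∀ t s, t < s → s < w.length → w.getD s 0 < w.getD t 0 →
      a.getD s 0 < a.getD t 0 := by
  intro t s hts hs hw
  have h1 := slideSet_antitone ha t s (by omega) hs
  rcases Nat.eq_or_lt_of_le h1 with heq | h
  · exact absurd (slideSet_run ha t s (by omega) hs heq) (by omega)
  · exact h

end seqs

/-- forward direction: standardization is a decreasing labeling -/
lemma isDec_mapIdx (f : ℕ → ℤ → ℤ → ℕ) : ∀ (G : GT ℕ) (a : ℤ) (lo : ℕ), VF G a lo →
    (∀ x ∈ G.ann a, ∀ y ∈ G.ann a, kLT x y → f x.1 x.2.1 x.2.2 < f y.1 y.2.1 y.2.2) →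
    IsDec (G.mapIdx f a) := by
  intro G
  induction G with
  | leaf => intro a lo _ _; trivial
  | node k l r ihl ihr =>
      intro a lo hv hmono
      obtain ⟨h1, h2, h3, h4⟩ := hv
      have hmem_root : ((k, a, a + (l.size : ℤ)) : K) ∈ (GT.node k l r).ann a := by
        simp [GT.ann]
      refine ⟨?_, ?_, ?_, ?_⟩
      · -- rootBelow for left
        cases l with
        | leaf => trivial
        | node k' l' r' =>
            obtain ⟨h1', h2', h3', h4'⟩ := h3
            show f k' a (a + (l'.size : ℤ)) < f k a (a + ((GT.node k' l' r').size : ℤ))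
            have hmem : ((k', a, a + (l'.size : ℤ)) : K) ∈ (GT.node k (GT.node k' l' r') r).ann a := by
              simp [GT.ann]
            refine hmono _ hmem _ hmem_root ?_
            rw [kLT_iff]
            show k < k' ∨ k' = k ∧
              ((a : ℤ) < a ∨ (a : ℤ) = a ∧ a + (l'.size : ℤ) < a + ((GT.node k' l' r').size : ℤ))
            have hsz : (GT.node k' l' r').size = l'.size + r'.size + 1 := rfl
            rw [hsz]
            push_cast
            omega
      · -- rootBelow for right
        cases r with
        | leaf => trivial
        | node k' l' r' =>
            obtain ⟨h1', h2', h3', h4'⟩ := h4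
            show f k' (a + (l.size : ℤ) + 1) (a + (l.size : ℤ) + 1 + (l'.size : ℤ)) <
              f k a (a + ((l.size : ℕ) : ℤ))
            have hmem : ((k', a + (l.size : ℤ) + 1, a + (l.size : ℤ) + 1 + (l'.size : ℤ)) : K)
                ∈ (GT.node k l (GT.node k' l' r')).ann a := by
              simp [GT.ann]
            refine hmono _ hmem _ hmem_root ?_
            rw [kLT_iff]
            exact Or.inl (show k < k' by omega)
      · refine ihl a k h3 ?_
        intro x hx y hy
        have hx' : x ∈ (GT.node k l r).ann a := by simp [GT.ann, hx]
        have hy' : y ∈ (GT.node k l r).ann a := by simp [GT.ann, hy]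
        exact hmono x hx' y hy'
      · refine ihr _ (k + 1) h4 ?_
        intro x hx y hy
        have hx' : x ∈ (GT.node k l r).ann a := by simp [GT.ann, hx]
        have hy' : y ∈ (GT.node k l r).ann a := by simp [GT.ann, hy]
        exact hmono x hx' y hy'

/-- backward direction: substituting a compatible sequence into a decreasing
labeling yields a valid filling -/
lemma VF_subst (subst : ℕ → ℕ) : ∀ (L : GT ℕ) (a : ℤ), IsDec L →
    (∀ x ∈ L.ann a, 1 ≤ subst x.1 ∧ (subst x.1 : ℤ) ≤ x.2.1) →
    (∀ x ∈ L.ann a, ∀ y ∈ L.ann a, x.1 < y.1 →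
      subst y.1 ≤ subst x.1 ∧ (y.2.1 < x.2.1 → subst y.1 < subst x.1)) →
    ∀ lo : ℕ, (∀ k l r, L = GT.node k l r → lo ≤ subst k) → VF (L.map subst) a lo := by
  intro L
  induction L with
  | leaf => intro a _ _ _ lo _; trivial
  | node k l r ihl ihr =>
      intro a hdec h1 h2 lo hlo
      obtain ⟨hbl, hbr, hdl, hdr⟩ := hdec
      have hmem_root : ((k, a, a + (l.size : ℤ)) : K) ∈ (GT.node k l r).ann a := by
        simp [GT.ann]
      have hroot := h1 _ hmem_root
      simp only at hroot
      refine ⟨hlo k l r rfl, by omega, ?_, ?_⟩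
      · refine ihl a hdl ?_ ?_ (subst k) ?_
        · intro x hx; exact h1 x (by simp [GT.ann, hx])
        · intro x hx y hy; exact h2 x (by simp [GT.ann, hx]) y (by simp [GT.ann, hy])
        · rintro k' l' r' rfl
          have hmem : ((k', a, a + (l'.size : ℤ)) : K) ∈ (GT.node k (GT.node k' l' r') r).ann a := by
            simp [GT.ann]
          exact (h2 _ hmem _ hmem_root hbl).1
      · have hsz : ((l.map subst).size : ℤ) = (l.size : ℤ) := by rw [GT.size_map]
        rw [hsz]
        refine ihr (a + l.size + 1) hdr ?_ ?_ (subst k + 1) ?_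
        · intro x hx; exact h1 x (by simp [GT.ann, hx])
        · intro x hx y hy; exact h2 x (by simp [GT.ann, hx]) y (by simp [GT.ann, hy])
        · rintro k' l' r' rfl
          have hmem : ((k', a + (l.size : ℤ) + 1, a + (l.size : ℤ) + 1 + (l'.size : ℤ)) : K)
              ∈ (GT.node k l (GT.node k' l' r')).ann a := by
            simp [GT.ann]
          have := h2 _ hmem _ hmem_root hbr
          simp only at this
          have hstrict := this.2 (by omega)
          omega

lemma map_stdL (f : ℕ → ℤ → ℤ → ℕ) (g : ℕ → ℕ) : ∀ (Gs : List (GT ℕ)) (ts : List (ℤ × BT)),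
    (stdL f Gs ts).map (GT.map g) = stdL (fun k ρ p => g (f k ρ p)) Gs ts
  | [], ts => by cases ts <;> simp [stdL]
  | G :: Gs, [] => by simp [stdL]
  | G :: Gs, p :: ts => by
      simp only [stdL, List.map_cons, List.cons.injEq]
      exact ⟨GT.map_mapIdx f g G p.1, map_stdL f g Gs ts⟩

lemma stdL_map (f : ℕ → ℤ → ℤ → ℕ) (g : ℕ → ℕ) : ∀ (Ls : List (GT ℕ)) (ts : List (ℤ × BT)),
    stdL f (Ls.map (GT.map g)) ts = stdL (fun k ρ p => f (g k) ρ p) Ls ts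
  | [], ts => by cases ts <;> simp [stdL]
  | L :: Ls, [] => by simp [stdL]
  | L :: Ls, p :: ts => by
      simp only [List.map_cons, stdL, List.cons.injEq]
      exact ⟨GT.mapIdx_map g f L p.1, stdL_map f g Ls ts⟩

lemma stdL_id (h : ℕ → ℤ → ℤ → ℕ) : ∀ (Gs : List (GT ℕ)) (ts : List (ℤ × BT)),
    Gs.length = ts.length → (∀ x ∈ annF Gs ts, h x.1 x.2.1 x.2.2 = x.1) →
    stdL h Gs ts = Gs
  | [], ts, _, _ => by cases ts <;> rfl
  | G :: Gs, [], hl, _ => by cases hl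
  | G :: Gs, p :: ts, hl, hp => by
      simp only [stdL, List.cons.injEq]
      constructor
      · rw [GT.mapIdx_congr h (fun k _ _ => k) G p.1
          (fun x hx => hp x (by simp [annF_cons, hx]))]
        exact GT.mapIdx_payload G p.1
      · exact stdL_id h Gs ts (by simpa using hl) (fun x hx => hp x (by simp [annF_cons, hx]))

lemma stdL_forall₂ (f : ℕ → ℤ → ℤ → ℕ) : ∀ (Gs : List (GT ℕ)) (ts : List (ℤ × BT)),
    List.Forall₂ (fun (G : GT ℕ) (p : ℤ × BT) => G.shape = p.2 ∧ VF G p.1 1) Gs ts →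
    (∀ x ∈ annF Gs ts, ∀ y ∈ annF Gs ts, kLT x y → f x.1 x.2.1 x.2.2 < f y.1 y.2.1 y.2.2) →
    List.Forall₂ (fun (L : GT ℕ) (p : ℤ × BT) => L.shape = p.2 ∧ IsDec L) (stdL f Gs ts) ts
  | [], ts, h, _ => by cases ts with
      | nil => exact List.Forall₂.nil
      | cons p ts => cases h
  | G :: Gs, [], h, _ => by cases h
  | G :: Gs, p :: ts, h, hmono => by
      obtain ⟨⟨hsh, hvf⟩, htail⟩ := List.forall₂_cons.1 h
      refine List.forall₂_cons.2 ⟨⟨by rw [GT.shape_mapIdx, hsh], ?_⟩, ?_⟩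
      · exact isDec_mapIdx f G p.1 1 hvf
          (fun x hx y hy => hmono x (by simp [annF_cons, hx]) y (by simp [annF_cons, hy]))
      · exact stdL_forall₂ f Gs ts htail
          (fun x hx y hy => hmono x (by simp [annF_cons, hx]) y (by simp [annF_cons, hy]))

lemma VF_substF (subst : ℕ → ℕ) : ∀ (Ls : List (GT ℕ)) (ts : List (ℤ × BT)),
    List.Forall₂ (fun (L : GT ℕ) (p : ℤ × BT) => L.shape = p.2 ∧ IsDec L) Ls ts →
    (∀ x ∈ annF Ls ts, 1 ≤ subst x.1 ∧ (subst x.1 : ℤ) ≤ x.2.1) →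
    (∀ x ∈ annF Ls ts, ∀ y ∈ annF Ls ts, x.1 < y.1 →
      subst y.1 ≤ subst x.1 ∧ (y.2.1 < x.2.1 → subst y.1 < subst x.1)) →
    List.Forall₂ (fun (G : GT ℕ) (p : ℤ × BT) => G.shape = p.2 ∧ VF G p.1 1)
      (Ls.map (GT.map subst)) ts
  | [], ts, h, _, _ => by cases ts with
      | nil => exact List.Forall₂.nil
      | cons p ts => cases h
  | L :: Ls, [], h, _, _ => by cases h
  | L :: Ls, p :: ts, h, h1, h2 => by
      obtain ⟨⟨hsh, hdec⟩, htail⟩ := List.forall₂_cons.1 h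
      refine List.forall₂_cons.2 ⟨⟨by rw [GT.shape_map, hsh], ?_⟩, ?_⟩
      · refine VF_subst subst L p.1 hdec
          (fun x hx => h1 x (by simp [annF_cons, hx]))
          (fun x hx y hy => h2 x (by simp [annF_cons, hx]) y (by simp [annF_cons, hy])) 1 ?_
        rintro k l r rfl
        have hmem : ((k, p.1, p.1 + (l.size : ℤ)) : K) ∈ annF (GT.node k l r :: Ls) (p :: ts) := by
          simp [annF_cons, GT.ann]
        exact (h1 _ hmem).1
      · exact VF_substF subst Ls ts htail
          (fun x hx => h1 x (by simp [annF_cons, hx]))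
          (fun x hx y hy => h2 x (by simp [annF_cons, hx]) y (by simp [annF_cons, hy]))

lemma forall₂_and_left {α β : Type} {R : α → β → Prop} {Q : α → Prop} :
    ∀ {Ls : List α} {ts : List β}, List.Forall₂ R Ls ts → (∀ L ∈ Ls, Q L) →
      List.Forall₂ (fun L p => R L p ∧ Q L) Ls ts
  | [], [], _, _ => List.Forall₂.nil
  | L :: Ls, p :: ts, h, hq => by
      obtain ⟨h1, h2⟩ := List.forall₂_cons.1 h
      exact List.forall₂_cons.2 ⟨⟨h1, hq L (by simp)⟩,
        forall₂_and_left h2 (fun L' hL' => hq L' (by simp [hL']))⟩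

lemma monoL_eq (Gs : List (GT ℕ)) :
    monoL Gs = (((Gs.map GT.labels).sum : Multiset ℕ).map
      (fun i => (MvPolynomial.X i : MvPolynomial ℕ ℚ))).prod := by
  induction Gs with
  | nil => simp [monoL]
  | cons G Gs ih =>
      simp only [monoL, List.map_cons, List.prod_cons, List.sum_cons, Multiset.map_add,
        Multiset.prod_add]
      rw [← ih]
      rfl

lemma sorted_range_map_succ (N : ℕ) :
    List.Pairwise (· ≤ ·) ((List.range N).map (· + 1)) := by
  refine List.pairwise_iff_getElem.2 fun i j hi hj hij => ?_
  simp only [List.getElem_map, List.getElem_range]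
  simp only [List.length_map, List.length_range] at hi hj
  omega

lemma eq_of_perm_of_sorted' {α : Type} {r : α → α → Prop} [Std.Antisymm r] {l₁ l₂ : List α}
    (hp : l₁.Perm l₂) (hs₁ : List.Pairwise r l₁) (hs₂ : List.Pairwise r l₂) : l₁ = l₂ :=
  List.Perm.eq_of_pairwise' hs₁ hs₂ hp

noncomputable def sortT (Gs : List (GT ℕ)) (ts : List (ℤ × BT)) : List K :=
  List.insertionSort kLE (annF Gs ts)

def rkF (S : List K) : ℕ → ℤ → ℤ → ℕ := fun v ρ p => S.idxOf (v, ρ, p) + 1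

@[simp] lemma rkF_eta (S : List K) (x : K) : rkF S x.1 x.2.1 x.2.2 = S.idxOf x + 1 := rfl

noncomputable def fwd1 (Gs : List (GT ℕ)) (ts : List (ℤ × BT)) : List (GT ℕ) :=
  stdL (rkF (sortT Gs ts)) Gs ts

noncomputable def fwd2 (Gs : List (GT ℕ)) (ts : List (ℤ × BT)) : List ℕ :=
  (sortT Gs ts).map (fun x => x.1)

def bwdF (Ls : List (GT ℕ)) (a : List ℕ) : List (GT ℕ) :=
  Ls.map (GT.map (fun t => a.getD (t - 1) 0))

def wordF (Ls : List (GT ℕ)) (ts : List (ℤ × BT)) (N : ℕ) : List ℤ :=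
  wordOf ((List.zipWith (fun (L : GT ℕ) (p : ℤ × BT) => L.rhoPairs p.1) Ls ts).flatten) N

lemma fwd_spec (Gs : List (GT ℕ)) (ts : List (ℤ × BT)) (N : ℕ)
    (hN : N = (ts.map (fun p => p.2.size)).sum)
    (hgap : ts.Pairwise gapR)
    (hGs : List.Forall₂ (fun (G : GT ℕ) (p : ℤ × BT) => G.shape = p.2 ∧ VF G p.1 1) Gs ts) :
    (List.Forall₂ (fun (L : GT ℕ) (p : ℤ × BT) => L.shape = p.2 ∧ IsDec L) (fwd1 Gs ts) ts ∧
      (((fwd1 Gs ts).map GT.labels).sum : Multiset ℕ) = (Multiset.range N).map (· + 1)) ∧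
    fwd2 Gs ts ∈ slideSet (wordF (fwd1 Gs ts) ts N) ∧
    bwdF (fwd1 Gs ts) (fwd2 Gs ts) = Gs ∧
    monoL Gs = monoS (fwd2 Gs ts) := by
  classical
  set T := annF Gs ts with hT
  set S := sortT Gs ts with hS
  have hSH : SH Gs ts := hGs.imp (fun _ _ h => h.1)
  have hST : S.Perm T := List.perm_insertionSort kLE T
  have hsorted : List.Pairwise kLE S := List.pairwise_insertionSort kLE T
  have hpos : T.Pairwise (fun x y => x.2.2 < y.2.2) := annF_pos_sorted Gs ts hSH hgap
  have hndT : T.Nodup := hpos.imp (fun {a b} h he => by rw [he] at h; exact lt_irrefl _ h)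
  have hndS : S.Nodup := (hST.nodup_iff).2 hndT
  have hlenT : T.length = N := by rw [hT, annF_length Gs ts hSH, hN]
  have hlenS : S.length = N := by rw [hST.length_eq, hlenT]
  have hmemS : ∀ x ∈ T, x ∈ S := fun x hx => (hST.mem_iff).2 hx
  have hbd : ∀ x ∈ T, 1 ≤ x.1 ∧ (x.1 : ℤ) ≤ x.2.1 := annF_bounds Gs ts hGs
  have hbdS : ∀ x ∈ S, 1 ≤ x.1 ∧ (x.1 : ℤ) ≤ x.2.1 := fun x hx => hbd x ((hST.mem_iff).1 hx)
  have hmono : ∀ x ∈ T, ∀ y ∈ T, kLT x y →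
      rkF S x.1 x.2.1 x.2.2 < rkF S y.1 y.2.1 y.2.2 := by
    intro x hx y hy h
    simp only [rkF_eta]
    have := sorted_indexOf_lt hsorted hndS (hmemS x hx) (hmemS y hy) h
    omega
  have h1 : List.Forall₂ (fun (L : GT ℕ) (p : ℤ × BT) => L.shape = p.2 ∧ IsDec L)
      (fwd1 Gs ts) ts := stdL_forall₂ _ Gs ts hGs hmono
  have hSH1 : SH (fwd1 Gs ts) ts := h1.imp (fun _ _ h => h.1)
  have hannF1 : annF (fwd1 Gs ts) ts
      = T.map (fun x => (rkF S x.1 x.2.1 x.2.2, x.2)) := annF_stdL _ Gs ts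
  -- labels
  have hlabels : (((fwd1 Gs ts).map GT.labels).sum : Multiset ℕ)
      = (Multiset.range N).map (· + 1) := by
    rw [labelsF_eq_annF _ ts hSH1, hannF1, List.map_map]
    have e1 : ((fun (x : K) => x.1) ∘ fun x => (rkF S x.1 x.2.1 x.2.2, x.2))
        = fun x : K => S.idxOf x + 1 := by
      funext x; simp [Function.comp]
    rw [e1]
    have e2 : (T.map (fun x : K => S.idxOf x + 1)).Perm
        (S.map (fun x : K => S.idxOf x + 1)) := (hST.map _).symm
    rw [Multiset.coe_eq_coe.2 e2]
    have e3 : S.map (fun x : K => S.idxOf x + 1)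
        = (S.map (fun x : K => S.idxOf x)).map (· + 1) := by
      rw [List.map_map]; rfl
    rw [e3, map_indexOf_range hndS, hlenS]
    rfl
  -- the word
  have hword : wordF (fwd1 Gs ts) ts N = S.map (fun x => x.2.1) := by
    set W : List K := S.map (fun x : K => (S.idxOf x + 1, x.2)) with hW
    have hWlen : W.length = N := by simp [hW, hlenS]
    have hperm : ((List.zipWith (fun (L : GT ℕ) (p : ℤ × BT) => L.rhoPairs p.1)
        (fwd1 Gs ts) ts).flatten).Perm (W.map (fun x => (x.1, x.2.1))) := by
      refine (rhoPairsF_perm _ ts hSH1).trans ?_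
      rw [hannF1, List.map_map, hW, List.map_map]
      have e : ((fun (x : K) => (x.1, x.2.1)) ∘ (fun x : K => (rkF S x.1 x.2.1 x.2.2, x.2)))
          = ((fun (x : K) => (x.1, x.2.1)) ∘ (fun x : K => (S.idxOf x + 1, x.2))) := by
        funext x; simp [Function.comp, rkF]
      rw [e]
      exact (hST.map _).symm
    have hlab : ∀ j (h : j < W.length), (W[j]).1 = j + 1 := by
      intro j hj
      have hj' : j < S.length := by rw [hlenS]; rw [hWlen] at hj; exact hj
      simp only [hW, List.getElem_map]
      rw [indexOf_getElem_self hndS hj']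
    have hws := word_spec _ W hperm hlab
    rw [hWlen] at hws
    show wordOf _ N = _
    rw [hws, hW, List.map_map]
    rfl
  -- compatible sequence membership
  have hfwd2 : fwd2 Gs ts = S.map (fun x : K => x.1) := rfl
  have hw_getD : ∀ t (ht : t < S.length), (wordF (fwd1 Gs ts) ts N).getD t 0
      = (S[t]).2.1 := by
    intro t ht
    rw [hword, List.getD_eq_getElem _ 0 (by simpa using ht), List.getElem_map]
  have hwlen : (wordF (fwd1 Gs ts) ts N).length = N := by simp [hword, hlenS]
  have ha'len : (fwd2 Gs ts).length = N := by simp [hfwd2, hlenS]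
  have ha'_getD : ∀ t (ht : t < S.length), (fwd2 Gs ts).getD t 0 = (S[t]).1 := by
    intro t ht
    rw [hfwd2, List.getD_eq_getElem _ 0 (by simpa using ht), List.getElem_map]
  have h2 : fwd2 Gs ts ∈ slideSet (wordF (fwd1 Gs ts) ts N) := by
    refine ⟨by rw [ha'len, hwlen], ?_, ?_, ?_⟩
    · intro x hx
      rw [hfwd2] at hx
      obtain ⟨y, hy, rfl⟩ := List.mem_map.1 hx
      exact (hbdS y hy).1
    · intro t ht
      rw [hwlen] at ht
      have htS : t < S.length := by rwa [hlenS]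
      rw [hw_getD t htS, ha'_getD t htS]
      exact (hbdS _ (List.getElem_mem htS)).2
    · intro t ht
      rw [hwlen] at ht
      have htS : t + 1 < S.length := by rwa [hlenS]
      have ht1S : t < S.length := by omega
      have hle := sorted_getElem_kLE hsorted ht1S htS (by omega)
      constructor
      · rw [ha'_getD _ htS, ha'_getD _ ht1S]
        exact hle.val_le
      · intro hwlt
        rw [hw_getD _ htS, hw_getD _ ht1S] at hwlt
        rw [ha'_getD _ htS, ha'_getD _ ht1S]
        by_contra hc
        push_neg at hc
        have hvle := hle.val_le
        have hveq : (S[t]'ht1S).1 = (S[t+1]'htS).1 := by omega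
        have := hle.rho_le hveq
        omega
  -- bwd ∘ fwd = id
  have h3 : bwdF (fwd1 Gs ts) (fwd2 Gs ts) = Gs := by
    rw [bwdF, fwd1, map_stdL]
    refine stdL_id _ Gs ts hGs.length_eq ?_
    intro x hx
    have hxS : x ∈ S := hmemS x hx
    have hidx : S.idxOf x < S.length := List.idxOf_lt_length_iff.2 hxS
    show (fwd2 Gs ts).getD (S.idxOf x + 1 - 1) 0 = x.1
    rw [Nat.add_sub_cancel, hfwd2,
      List.getD_eq_getElem _ 0 (by simpa using hidx), List.getElem_map,
      List.getElem_idxOf hidx]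
  -- monomials match
  have h4 : monoL Gs = monoS (fwd2 Gs ts) := by
    rw [monoL_eq, labelsF_eq_annF Gs ts hSH, ← hT]
    have e1 : monoS (fwd2 Gs ts)
        = (((S.map (fun x : K => x.1) : List ℕ) : Multiset ℕ).map
            (fun i => (MvPolynomial.X i : MvPolynomial ℕ ℚ))).prod := by
      rw [hfwd2, monoS, Multiset.map_coe, Multiset.prod_coe]
    rw [e1, Multiset.coe_eq_coe.2 ((hST.map (fun x : K => x.1)).symm)]
  exact ⟨⟨h1, hlabels⟩, h2, h3, h4⟩

def labLE (x y : K) : Prop := x.1 ≤ y.1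
instance : DecidableRel labLE := fun x y => inferInstanceAs (Decidable (x.1 ≤ y.1))
instance : IsTotal K labLE := ⟨fun x y => le_total x.1 y.1⟩
instance : IsTrans K labLE := ⟨fun _ _ _ h h' => le_trans h h'⟩

lemma bwd_spec (Ls : List (GT ℕ)) (a : List ℕ) (ts : List (ℤ × BT)) (N : ℕ)
    (hN : N = (ts.map (fun p => p.2.size)).sum)
    (hgap : ts.Pairwise gapR)
    (hLs : List.Forall₂ (fun (L : GT ℕ) (p : ℤ × BT) => L.shape = p.2 ∧ IsDec L) Ls ts)
    (hlab : ((Ls.map GT.labels).sum : Multiset ℕ) = (Multiset.range N).map (· + 1))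
    (ha : a ∈ slideSet (wordF Ls ts N)) :
    List.Forall₂ (fun (G : GT ℕ) (p : ℤ × BT) => G.shape = p.2 ∧ VF G p.1 1) (bwdF Ls a) ts ∧
    fwd1 (bwdF Ls a) ts = Ls ∧ fwd2 (bwdF Ls a) ts = a := by
  classical
  set subst : ℕ → ℕ := fun t => a.getD (t - 1) 0 with hsubst
  have hSHL : SH Ls ts := hLs.imp (fun _ _ h => h.1)
  set A := annF Ls ts with hA
  set LB := List.insertionSort labLE A with hLB
  have hLBperm : LB.Perm A := List.perm_insertionSort labLE A
  have hLBsorted : List.Pairwise labLE LB := List.pairwise_insertionSort labLE A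
  have hlenA : A.length = N := by rw [hA, annF_length Ls ts hSHL, hN]
  have hlenLB : LB.length = N := by rw [hLBperm.length_eq, hlenA]
  have hms : ((A.map (fun x : K => x.1) : List ℕ) : Multiset ℕ)
      = (Multiset.range N).map (· + 1) := by
    rw [← labelsF_eq_annF Ls ts hSHL, hlab]
  have hLBlab : LB.map (fun x : K => x.1) = (List.range N).map (· + 1) := by
    refine eq_of_perm_of_sorted' (r := (· ≤ ·)) ?_ ?_ (sorted_range_map_succ N)
    · refine Multiset.coe_eq_coe.1 ?_
      rw [Multiset.coe_eq_coe.2 (hLBperm.map _), hms]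
      rfl
    · exact List.pairwise_map.2 hLBsorted
  have hLBj : ∀ j (hj : j < LB.length), (LB[j]).1 = j + 1 := by
    intro j hj
    have h1 : (LB.map (fun x : K => x.1))[j]'(by simpa using hj) = (LB[j]).1 :=
      List.getElem_map _
    have h2 := List.getElem_of_eq hLBlab
      (by simpa using hj : j < (LB.map (fun x : K => x.1)).length)
    rw [h1] at h2
    simpa using h2
  have hword : wordF Ls ts N = LB.map (fun x => x.2.1) := by
    have hperm : ((List.zipWith (fun (L : GT ℕ) (p : ℤ × BT) => L.rhoPairs p.1)
        Ls ts).flatten).Perm (LB.map (fun x => (x.1, x.2.1))) := by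
      refine (rhoPairsF_perm Ls ts hSHL).trans ?_
      exact (hLBperm.map _).symm
    have hws := word_spec _ LB hperm hLBj
    rw [hlenLB] at hws
    exact hws
  have hwlen : (wordF Ls ts N).length = N := by simp [hword, hlenLB]
  have hal : a.length = N := by rw [ha.1, hwlen]
  have hw_getD : ∀ j (hj : j < LB.length), (wordF Ls ts N).getD j 0 = (LB[j]).2.1 := by
    intro j hj
    rw [hword, List.getD_eq_getElem _ 0 (by simpa using hj), List.getElem_map]
  have hmemLB : ∀ x ∈ A, ∃ j, ∃ hj : j < LB.length, LB[j] = x := by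
    intro x hx
    exact List.getElem_of_mem ((hLBperm.mem_iff).2 hx)
  have H1 : ∀ x ∈ A, 1 ≤ subst x.1 ∧ (subst x.1 : ℤ) ≤ x.2.1 := by
    intro x hx
    obtain ⟨j, hj, hjx⟩ := hmemLB x hx
    have hx1 : x.1 = j + 1 := by rw [← hjx]; exact hLBj j hj
    have hjN : j < N := by rwa [hlenLB] at hj
    have hsx : subst x.1 = a.getD j 0 := by rw [hsubst, hx1]; simp
    constructor
    · rw [hsx]
      refine ha.2.1 _ ?_
      rw [List.getD_eq_getElem _ 0 (by omega : j < a.length)]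
      exact List.getElem_mem _
    · rw [hsx]
      have := ha.2.2.1 j (by rwa [hwlen])
      rw [hw_getD j hj, hjx] at this
      exact this
  have H2 : ∀ x ∈ A, ∀ y ∈ A, x.1 < y.1 →
      subst y.1 ≤ subst x.1 ∧ (y.2.1 < x.2.1 → subst y.1 < subst x.1) := by
    intro x hx y hy hxy
    obtain ⟨i, hi, hix⟩ := hmemLB x hx
    obtain ⟨j, hj, hjy⟩ := hmemLB y hy
    have hx1 : x.1 = i + 1 := by rw [← hix]; exact hLBj i hi
    have hy1 : y.1 = j + 1 := by rw [← hjy]; exact hLBj j hj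
    have hij : i < j := by omega
    have hjN : j < (wordF Ls ts N).length := by rw [hwlen]; rwa [hlenLB] at hj
    have hsx : subst x.1 = a.getD i 0 := by rw [hsubst, hx1]; simp
    have hsy : subst y.1 = a.getD j 0 := by rw [hsubst, hy1]; simp
    constructor
    · rw [hsx, hsy]
      exact slideSet_antitone ha i j (by omega) hjN
    · intro hρ
      rw [hsx, hsy]
      refine slideSet_strict ha i j hij hjN ?_
      rw [hw_getD i hi, hw_getD j hj, hix, hjy]
      exact hρ
  have h7 : List.Forall₂ (fun (G : GT ℕ) (p : ℤ × BT) => G.shape = p.2 ∧ VF G p.1 1)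
      (bwdF Ls a) ts := VF_substF subst Ls ts hLs H1 H2
  -- identify the sorted list of the filling
  set substT : K → K := fun x => (subst x.1, x.2) with hsubstT
  have hannGs : annF (bwdF Ls a) ts = A.map substT := annF_map subst Ls ts
  have hposA : A.Pairwise (fun x y => x.2.2 < y.2.2) := annF_pos_sorted Ls ts hSHL hgap
  have hposT' : (A.map substT).Pairwise (fun x y => x.2.2 < y.2.2) :=
    List.pairwise_map.2 hposA
  have hndT' : (A.map substT).Nodup :=
    hposT'.imp (fun {u v} h he => by rw [he] at h; exact lt_irrefl _ h)
  set C := LB.map substT with hC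
  have hCperm : C.Perm (A.map substT) := hLBperm.map substT
  have hndC : C.Nodup := (hCperm.nodup_iff).2 hndT'
  have hCsorted : List.Pairwise kLE C := by
    refine List.pairwise_iff_getElem.2 fun i j hi hj hij => ?_
    have hi' : i < LB.length := by simpa [hC] using hi
    have hj' : j < LB.length := by simpa [hC] using hj
    have hCi : C[i] = substT (LB[i]'hi') := List.getElem_map _
    have hCj : C[j] = substT (LB[j]'hj') := List.getElem_map _
    rw [hCi, hCj]
    set x := LB[i]'hi' with hx
    set y := LB[j]'hj' with hy
    have hxA : x ∈ A := (hLBperm.mem_iff).1 (List.getElem_mem hi')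
    have hyA : y ∈ A := (hLBperm.mem_iff).1 (List.getElem_mem hj')
    have hx1 : x.1 = i + 1 := hLBj i hi'
    have hy1 : y.1 = j + 1 := hLBj j hj'
    have hjN : j < (wordF Ls ts N).length := by rw [hwlen]; rwa [hlenLB] at hj'
    have hsx : subst x.1 = a.getD i 0 := by rw [hsubst, hx1]; simp
    have hsy : subst y.1 = a.getD j 0 := by rw [hsubst, hy1]; simp
    have hval : (substT y).1 ≤ (substT x).1 := by
      show subst y.1 ≤ subst x.1
      rw [hsx, hsy]
      exact slideSet_antitone ha i j (by omega) hjN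
    refine kLE_of hval (fun hveq => ?_) (fun hveq hρeq => ?_)
    · -- equal values: rho weakly increases
      show x.2.1 ≤ y.2.1
      have heq : a.getD j 0 = a.getD i 0 := by
        have : subst x.1 = subst y.1 := hveq
        rw [hsx, hsy] at this
        omega
      have := slideSet_run ha i j (by omega) hjN heq
      rwa [hw_getD i hi', hw_getD j hj'] at this
    · -- equal values and rho: positions increase
      show x.2.2 ≤ y.2.2
      have hρ : x.2.1 = y.2.1 := hρeq
      rcases annF_trichotomy Ls ts hLs hgap x hxA y hyA hρ with he | ⟨_, hp⟩ | ⟨hl, _⟩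
      · rw [he]
      · exact hp.le
      · omega
  have hST' : (sortT (bwdF Ls a) ts).Perm (annF (bwdF Ls a) ts) :=
    List.perm_insertionSort kLE _
  have hCS : C = sortT (bwdF Ls a) ts := by
    refine eq_of_perm_of_sorted' (r := kLE) ?_ hCsorted
      (List.pairwise_insertionSort kLE _)
    refine hCperm.trans ?_
    rw [← hannGs]
    exact hST'.symm
  have h9 : fwd2 (bwdF Ls a) ts = a := by
    rw [fwd2, ← hCS, hC, List.map_map]
    have e1 : ((fun x : K => x.1) ∘ substT) = (fun x : K => subst x.1) := by
      funext x; rfl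
    rw [e1]
    have e2 : LB.map (fun x : K => subst x.1)
        = (LB.map (fun x : K => x.1)).map subst := by
      rw [List.map_map]; rfl
    rw [e2, hLBlab, List.map_map]
    have e3 : (subst ∘ (· + 1)) = fun j => a.getD j 0 := by
      funext j; simp [hsubst]
    rw [e3, ← hal, range_map_getD]
  have h8 : fwd1 (bwdF Ls a) ts = Ls := by
    rw [fwd1, ← hCS]
    have e0 : bwdF Ls a = Ls.map (GT.map subst) := rfl
    rw [e0, stdL_map]
    refine stdL_id _ Ls ts hLs.length_eq ?_
    intro x hx
    obtain ⟨j, hj, hjx⟩ := hmemLB x hx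
    have hx1 : x.1 = j + 1 := by rw [← hjx]; exact hLBj j hj
    have hjC : j < C.length := by simpa [hC] using hj
    have hCj : C[j]'hjC = substT x := by
      have : C[j]'hjC = substT (LB[j]'hj) := List.getElem_map _
      rw [this, hjx]
    show C.idxOf (subst x.1, x.2.1, x.2.2) + 1 = x.1
    have he : ((subst x.1, x.2.1, x.2.2) : K) = substT x := rfl
    rw [he, ← hCj, indexOf_getElem_self hndC hjC, hx1]
  exact ⟨h7, h8, h9⟩

open Classical in
noncomputable def DecFin (ts : List (ℤ × BT)) (N : ℕ) : Finset (List (GT ℕ)) :=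
  (allLsF ts (N + 1)).filter (fun Ls =>
    List.Forall₂ (fun (L : GT ℕ) (p : ℤ × BT) => L.shape = p.2 ∧ IsDec L) Ls ts ∧
    ((Ls.map GT.labels).sum : Multiset ℕ) = (Multiset.range N).map (· + 1))

lemma coe_DecFin (ts : List (ℤ × BT)) (N : ℕ) :
    ↑(DecFin ts N) = {Ls : List (GT ℕ) |
      List.Forall₂ (fun (L : GT ℕ) (p : ℤ × BT) => L.shape = p.2 ∧ IsDec L) Ls ts ∧
      ((Ls.map GT.labels).sum : Multiset ℕ) = (Multiset.range N).map (· + 1)} := by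
  classical
  ext Ls
  simp only [DecFin, Finset.coe_filter, Set.mem_setOf_eq, Finset.mem_coe]
  constructor
  · rintro ⟨-, h⟩; exact h
  · rintro ⟨h1, h2⟩
    refine ⟨(mem_allLsF ts (N + 1) Ls).2 ?_, h1, h2⟩
    refine (forall₂_and_left (h1.imp (fun _ _ h => h.1)) ?_).imp
      (fun _ _ h => ⟨h.1, h.2⟩)
    intro L hL m hm
    have hmem : m ∈ ((Ls.map GT.labels).sum : Multiset ℕ) :=
      ms_mem_sum _ _ (List.mem_map_of_mem (f := GT.labels) hL) m hm
    rw [h2] at hmem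
    obtain ⟨j, hj, rfl⟩ := Multiset.mem_map.1 hmem
    rw [Multiset.mem_range] at hj
    omega

lemma mem_DecFin_iff {ts : List (ℤ × BT)} {N : ℕ} {Ls : List (GT ℕ)} :
    Ls ∈ DecFin ts N ↔
      (List.Forall₂ (fun (L : GT ℕ) (p : ℤ × BT) => L.shape = p.2 ∧ IsDec L) Ls ts ∧
      ((Ls.map GT.labels).sum : Multiset ℕ) = (Multiset.range N).map (· + 1)) := by
  rw [← Finset.mem_coe, coe_DecFin]
  exact Iff.rfl

lemma mem_slideFin_iff {w : List ℤ} {a : List ℕ} :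
    a ∈ slideFin w ↔ a ∈ slideSet w := by
  rw [← Finset.mem_coe, coe_slideFin]

theorem forest_poly_slide_expansion' (F : IndexedForest) :
    F.poly = ∑ᶠ Ls ∈ {Ls : List (GT ℕ) |
        List.Forall₂ (fun (L : GT ℕ) (p : ℤ × BT) => L.shape = p.2 ∧ IsDec L)
          Ls F.trees ∧
        ((Ls.map GT.labels).sum : Multiset ℕ)
          = (Multiset.range F.size).map (· + 1)},
      slide (wordOf
        ((List.zipWith (fun (L : GT ℕ) (p : ℤ × BT) => L.rhoPairs p.1)
          Ls F.trees).flatten) F.size) := by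
  classical
  have hN : F.size = (F.trees.map (fun p => p.2.size)).sum := rfl
  have hgap : F.trees.Pairwise gapR := List.isChain_iff_pairwise.1 F.gaps
  have step1 : F.poly = ∑ Gs ∈ fillsL F.trees, monoL Gs := polyL_eq_sum F.trees
  have step2 : (∑ᶠ Ls ∈ {Ls : List (GT ℕ) |
      List.Forall₂ (fun (L : GT ℕ) (p : ℤ × BT) => L.shape = p.2 ∧ IsDec L)
        Ls F.trees ∧
      ((Ls.map GT.labels).sum : Multiset ℕ)
        = (Multiset.range F.size).map (· + 1)},
      slide (wordF Ls F.trees F.size))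
      = ∑ Ls ∈ DecFin F.trees F.size, slide (wordF Ls F.trees F.size) := by
    rw [← coe_DecFin, finsum_mem_coe_finset]
  have step3 : (∑ Ls ∈ DecFin F.trees F.size, slide (wordF Ls F.trees F.size))
      = ∑ x ∈ (DecFin F.trees F.size).sigma
          (fun Ls => slideFin (wordF Ls F.trees F.size)), monoS x.2 := by
    rw [Finset.sum_congr rfl (fun Ls _ => slide_eq_sum (wordF Ls F.trees F.size)),
      Finset.sum_sigma']
  have step4 : (∑ Gs ∈ fillsL F.trees, monoL Gs)
      = ∑ x ∈ (DecFin F.trees F.size).sigma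
          (fun Ls => slideFin (wordF Ls F.trees F.size)), monoS x.2 := by
    refine Finset.sum_nbij'
      (fun Gs => (⟨fwd1 Gs F.trees, fwd2 Gs F.trees⟩ : Σ _ : List (GT ℕ), List ℕ))
      (fun x => bwdF x.1 x.2) ?_ ?_ ?_ ?_ ?_
    · intro Gs hGs
      obtain ⟨⟨h1, hlab⟩, h2, -, -⟩ :=
        fwd_spec Gs F.trees F.size hN hgap ((mem_fillsL _ _).1 hGs)
      rw [Finset.mem_sigma]
      exact ⟨mem_DecFin_iff.2 ⟨h1, hlab⟩, mem_slideFin_iff.2 h2⟩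
    · intro x hx
      rw [Finset.mem_sigma] at hx
      obtain ⟨hLs, hlab⟩ := mem_DecFin_iff.1 hx.1
      have ha := mem_slideFin_iff.1 hx.2
      exact (mem_fillsL _ _).2 (bwd_spec x.1 x.2 F.trees F.size hN hgap hLs hlab ha).1
    · intro Gs hGs
      exact (fwd_spec Gs F.trees F.size hN hgap ((mem_fillsL _ _).1 hGs)).2.2.1
    · intro x hx
      rw [Finset.mem_sigma] at hx
      obtain ⟨hLs, hlab⟩ := mem_DecFin_iff.1 hx.1
      have ha := mem_slideFin_iff.1 hx.2
      obtain ⟨-, h8, h9⟩ := bwd_spec x.1 x.2 F.trees F.size hN hgap hLs hlab ha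
      obtain ⟨Ls, a⟩ := x
      simp only at h8 h9 ⊢
      rw [h8, h9]
    · intro Gs hGs
      exact (fwd_spec Gs F.trees F.size hN hgap ((mem_fillsL _ _).1 hGs)).2.2.2
  rw [step1, step4, ← step3, ← step2]
  rfl


/-- the slide expansion of forest polynomials:
`β_F = Σ_{ℓ ∈ Dec(F)} 𝔉(i_ℓ)`, where `ℓ` ranges over decreasing labelings of
`F` (labels `1,…,|F|` used bijectively, decreasing away from the roots) and
`i_ℓ` records the `ρ_F`-values of the internal nodes following `ℓ`. -/
theorem forest_poly_slide_expansion (F : IndexedForest) :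
    F.poly = ∑ᶠ Ls ∈ {Ls : List (GT ℕ) |
        List.Forall₂ (fun (L : GT ℕ) (p : ℤ × BT) => L.shape = p.2 ∧ IsDec L)
          Ls F.trees ∧
        ((Ls.map GT.labels).sum : Multiset ℕ)
          = (Multiset.range F.size).map (· + 1)},
      slide (wordOf
        ((List.zipWith (fun (L : GT ℕ) (p : ℤ × BT) => L.rhoPairs p.1)
          Ls F.trees).flatten) F.size) := by
  exact forest_poly_slide_expansion' F
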